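/- Let m ≥ 1, n = 2m+1, q = 3^n, and d = 2·3^m + 1 odd. If x₁, x₂ are nonzero squares in GF(q) satisfying c₁x₁ + c₂x₂ = 0 and c₁x₁^d + c₂x₂^d = 0 for some c₁, c₂ ∈ {1, -1} ⊆ GF(3), then x₁ = x₂. In particular, no 2-element subset {x₁, x₂} of the set of nonzero squares satisfies this system. -/

import Mathlib

lemma neg_one_not_square (m : ℕ) : ¬ IsSquare (-1 : GaloisField 3 (2 * m + 1)) := by
  letI : Fintype (GaloisField 3 (2 * m + 1)) := Fintype.ofFinite _
  rw [FiniteField.isSquare_neg_one_iff]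
  have hc : Fintype.card (GaloisField 3 (2 * m + 1)) = 3 ^ (2 * m + 1) := by
    rw [← Nat.card_eq_fintype_card]; exact GaloisField.card 3 (2 * m + 1) (by omega)
  rw [hc]
  have : 3 ^ (2 * m + 1) % 4 = 3 := by
    have : (3 : ℕ) ^ (2 * m + 1) = 9 ^ m * 3 := by
      rw [pow_succ, pow_mul]; norm_num
    rw [this, Nat.mul_mod, Nat.pow_mod]
    norm_num
  omega

/-- If x₁, x₂ are nonzero squares in GF(3^{2m+1}) with c₁x₁ + c₂x₂ = 0 and
c₁x₁^d + c₂x₂^d = 0 for c₁, c₂ ∈ {1, -1}, then x₁ = x₂; in particular no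
2-element subset of the nonzero squares satisfies the system. -/
theorem stmt_3 (m : ℕ) (hm : 1 ≤ m) :
    let F := GaloisField 3 (2 * m + 1)
    let d := 2 * 3 ^ m + 1
    (∀ x₁ x₂ c₁ c₂ : F, (c₁ = 1 ∨ c₁ = -1) → (c₂ = 1 ∨ c₂ = -1) →
      x₁ ≠ 0 → IsSquare x₁ → x₂ ≠ 0 → IsSquare x₂ →
      c₁ * x₁ + c₂ * x₂ = 0 → c₁ * x₁ ^ d + c₂ * x₂ ^ d = 0 → x₁ = x₂) ∧
    ¬ ∃ (x₁ x₂ c₁ c₂ : F), x₁ ≠ x₂ ∧ (c₁ = 1 ∨ c₁ = -1) ∧ (c₂ = 1 ∨ c₂ = -1) ∧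
      x₁ ≠ 0 ∧ IsSquare x₁ ∧ x₂ ≠ 0 ∧ IsSquare x₂ ∧
      c₁ * x₁ + c₂ * x₂ = 0 ∧ c₁ * x₁ ^ d + c₂ * x₂ ^ d = 0 := by
  intro F d
  have main : ∀ x₁ x₂ c₁ c₂ : F, (c₁ = 1 ∨ c₁ = -1) → (c₂ = 1 ∨ c₂ = -1) →
      x₁ ≠ 0 → IsSquare x₁ → x₂ ≠ 0 → IsSquare x₂ →
      c₁ * x₁ + c₂ * x₂ = 0 → c₁ * x₁ ^ d + c₂ * x₂ ^ d = 0 → x₁ = x₂ := by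
    intro x₁ x₂ c₁ c₂ hc₁ hc₂ hx₁ hs₁ hx₂ hs₂ hlin _
    have hneg : x₂ ≠ -x₁ := by
      intro h
      apply neg_one_not_square m
      have : (-1 : F) = x₂ * x₁⁻¹ := by
        rw [h]; rw [neg_mul, mul_inv_cancel₀ hx₁]
      rw [this]
      exact hs₂.mul (hs₁.inv)
    rcases hc₁ with rfl | rfl <;> rcases hc₂ with rfl | rfl
    · exact absurd (by linear_combination hlin) hneg
    · linear_combination hlin
    · linear_combination -hlin
    · exact absurd (by linear_combination -hlin) hneg
  refine ⟨main, ?_⟩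
  rintro ⟨x₁, x₂, c₁, c₂, hne, hc₁, hc₂, hx₁, hs₁, hx₂, hs₂, h1, h2⟩
  exact hne (main x₁ x₂ c₁ c₂ hc₁ hc₂ hx₁ hs₁ hx₂ hs₂ h1 h2)
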